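/- With notation as in the operator-composition construction: if H₁ and H₂ are τ-periodic and both satisfy the K symmetry with ε_k = 1, namely Hⱼ(k,t) = k̂ Hⱼ(−k,−t)* k̂⁻¹ for a fixed unitary k̂, then the composed Hamiltonian H(k,t) (given by H₂(k,2t) on [0,τ/4], H₁(k,2t−τ/2) on (τ/4,3τ/4), H₂(k,2t−τ) on [3τ/4,τ], extended periodically) also satisfies H(k,t) = k̂ H(−k,−t)* k̂⁻¹. -/
import Mathlib


open Matrix

/-- Lemma 1, K-symmetry case (`ε_k = 1`): if the τ-periodic Hamiltonians
`H₁(k,t), H₂(k,t)` both satisfy `Hⱼ(k,t) = k̂ Hⱼ(-k,-t)* k̂⁻¹` (entrywise complex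
conjugation) for a fixed unitary `k̂`, then so does the composed Hamiltonian. -/
theorem composition_preserves_K_symmetry (n d : ℕ) (τ : ℝ) (hτ : 0 < τ)
    (H₁ H₂ H : (Fin d → ℝ) → ℝ → Matrix (Fin n) (Fin n) ℂ)
    (hper₁ : ∀ k, Function.Periodic (H₁ k) τ) (hper₂ : ∀ k, Function.Periodic (H₂ k) τ)
    (hperH : ∀ k, Function.Periodic (H k) τ)
    (hcomp₁ : ∀ k, ∀ t : ℝ, 0 ≤ t → t ≤ τ / 4 → H k t = H₂ k (2 * t))
    (hcomp₂ : ∀ k, ∀ t : ℝ, τ / 4 < t → t < 3 * τ / 4 → H k t = H₁ k (2 * t - τ / 2))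
    (hcomp₃ : ∀ k, ∀ t : ℝ, 3 * τ / 4 ≤ t → t ≤ τ → H k t = H₂ k (2 * t - τ))
    (khat : Matrix (Fin n) (Fin n) ℂ)
    (hk_unitary : khatᴴ * khat = 1)
    (hk_invol : khat * khat.map (starRingEnd ℂ) = 1 ∨
      khat * khat.map (starRingEnd ℂ) = -1)
    (hK₁ : ∀ k t, H₁ k t = khat * (H₁ (-k) (-t)).map (starRingEnd ℂ) * khat⁻¹)
    (hK₂ : ∀ k t, H₂ k t = khat * (H₂ (-k) (-t)).map (starRingEnd ℂ) * khat⁻¹) :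
    ∀ k t, H k t = khat * (H (-k) (-t)).map (starRingEnd ℂ) * khat⁻¹ := by
  have key : ∀ k, ∀ t : ℝ, 0 ≤ t → t < τ →
      H k t = khat * (H (-k) (-t)).map (starRingEnd ℂ) * khat⁻¹ := by
    intro k t ht0 htτ
    rcases le_or_gt t (τ / 4) with h1 | h1
    · have e1 : H (-k) (-t) = H₂ (-k) (-(2 * t)) := by
        have p1 : H (-k) (-t + τ) = H (-k) (-t) := hperH (-k) (-t)
        have p2 : H₂ (-k) (-(2 * t) + τ) = H₂ (-k) (-(2 * t)) := hper₂ (-k) (-(2 * t))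
        have c : H (-k) (-t + τ) = H₂ (-k) (2 * (-t + τ) - τ) :=
          hcomp₃ (-k) (-t + τ) (by linarith) (by linarith)
        rw [← p1, c, show 2 * (-t + τ) - τ = -(2 * t) + τ by ring, p2]
      rw [hcomp₁ k t ht0 h1, e1]
      exact hK₂ k (2 * t)
    · rcases lt_or_ge t (3 * τ / 4) with h2 | h2
      · have e1 : H (-k) (-t) = H₁ (-k) (-(2 * t - τ / 2)) := by
          have p1 : H (-k) (-t + τ) = H (-k) (-t) := hperH (-k) (-t)
          have p2 : H₁ (-k) (-(2 * t - τ / 2) + τ) = H₁ (-k) (-(2 * t - τ / 2)) :=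
            hper₁ (-k) (-(2 * t - τ / 2))
          have c : H (-k) (-t + τ) = H₁ (-k) (2 * (-t + τ) - τ / 2) :=
            hcomp₂ (-k) (-t + τ) (by linarith) (by linarith)
          rw [← p1, c, show 2 * (-t + τ) - τ / 2 = -(2 * t - τ / 2) + τ by ring, p2]
        rw [hcomp₂ k t h1 h2, e1]
        exact hK₁ k (2 * t - τ / 2)
      · have e1 : H (-k) (-t) = H₂ (-k) (-(2 * t - τ)) := by
          have p1 : H (-k) (-t + τ) = H (-k) (-t) := hperH (-k) (-t)
          have p2 : H₂ (-k) (-(2 * t - τ) + τ) = H₂ (-k) (-(2 * t - τ)) :=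
            hper₂ (-k) (-(2 * t - τ))
          have c : H (-k) (-t + τ) = H₂ (-k) (2 * (-t + τ)) :=
            hcomp₁ (-k) (-t + τ) (by linarith) (by linarith)
          rw [← p1, c, show 2 * (-t + τ) = -(2 * t - τ) + τ by ring, p2]
        rw [hcomp₃ k t h2 (le_of_lt htτ), e1]
        exact hK₂ k (2 * t - τ)
  intro k t
  set s := toIcoMod hτ 0 t with hs
  set m := toIcoDiv hτ 0 t with hm
  have hmem := toIcoMod_mem_Ico' hτ t
  have hts : t = s + m • τ := (toIcoMod_add_toIcoDiv_zsmul hτ 0 t).symm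
  have h1 : H k t = H k s := by
    conv_lhs => rw [hts]
    exact ((hperH k).zsmul m) s
  have h2 : H (-k) (-t) = H (-k) (-s) := by
    have h3 : -t = -s - m • τ := by rw [hts]; ring
    rw [h3]
    exact (hperH (-k)).sub_zsmul_eq m
  rw [h1, h2]
  exact key k s hmem.1 hmem.2
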